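/- Let M = (S, A, P^a, r^a, γ) be a finite MDP with |S| = n and 0 ≤ γ < 1, D ∈ ℝ^{n×m} a stochastic matrix, and for each a ∈ A let K^a ∈ ℝ^{m×n} be stochastic and r̄^a ∈ ℝ^m. Define M̄ = (S̄, A, K^a·D, r̄^a, γ) with |S̄| = m, and let v* be the optimal value function of M and Q̄* the optimal action-value function of M̄. Then ‖v* − Γ(D·Q̄*)‖_∞ ≤ (1/(1−γ))·max_a ‖r^a − D·r̄^a‖_∞ + (R̄_dif/(1−γ)²)·((γ/2)·max_a ‖P^a − D·K^a‖_∞ + σ(D)), where Γ takes row-wise maxima, R̄_dif = max_{a,i} r̄^a_i − min_{a,i} r̄^a_i, and σ(D) = max_i (1 − max_j d_{ij}). -/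

import Mathlib

open Finset

lemma conv_le' {ι : Type*} [Fintype ι] (w x : ι → ℝ)
    (hw : ∀ j, 0 ≤ w j) (hs : ∑ j, w j = 1) {c : ℝ} (hx : ∀ j, x j ≤ c) :
    ∑ j, w j * x j ≤ c := by
  calc ∑ j, w j * x j ≤ ∑ j, w j * c :=
        Finset.sum_le_sum fun j _ => mul_le_mul_of_nonneg_left (hx j) (hw j)
    _ = c := by rw [← Finset.sum_mul, hs, one_mul]

lemma conv_ge' {ι : Type*} [Fintype ι] (w x : ι → ℝ)
    (hw : ∀ j, 0 ≤ w j) (hs : ∑ j, w j = 1) {c : ℝ} (hx : ∀ j, c ≤ x j) :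
    c ≤ ∑ j, w j * x j := by
  calc c = ∑ j, w j * c := by rw [← Finset.sum_mul, hs, one_mul]
    _ ≤ ∑ j, w j * x j :=
        Finset.sum_le_sum fun j _ => mul_le_mul_of_nonneg_left (hx j) (hw j)

lemma abs_conv_le' {ι : Type*} [Fintype ι] (w x : ι → ℝ)
    (hw : ∀ j, 0 ≤ w j) (hs : ∑ j, w j = 1) {c : ℝ} (hx : ∀ j, |x j| ≤ c) :
    |∑ j, w j * x j| ≤ c := by
  calc |∑ j, w j * x j| ≤ ∑ j, |w j * x j| := Finset.abs_sum_le_sum_abs _ _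
    _ = ∑ j, w j * |x j| := by
        refine Finset.sum_congr rfl fun j _ => ?_
        rw [abs_mul, abs_of_nonneg (hw j)]
    _ ≤ c := conv_le' w _ hw hs hx

lemma abs_sup'_sub_sup'_le' {ι : Type*} [Fintype ι] (hs : (univ : Finset ι).Nonempty)
    (f g : ι → ℝ) {M : ℝ} (h : ∀ a, |f a - g a| ≤ M) :
    |univ.sup' hs f - univ.sup' hs g| ≤ M := by
  rw [abs_le]
  constructor
  · rw [neg_le, neg_sub, sub_le_iff_le_add]
    refine Finset.sup'_le _ _ fun a _ => ?_
    have h1 := (abs_le.mp (h a)).1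
    have h2 := Finset.le_sup' f (Finset.mem_univ a)
    linarith
  · rw [sub_le_iff_le_add]
    refine Finset.sup'_le _ _ fun a _ => ?_
    have h1 := (abs_le.mp (h a)).2
    have h2 := Finset.le_sup' g (Finset.mem_univ a)
    linarith

lemma rowzero_spread' {ι : Type*} [Fintype ι] (e w : ι → ℝ)
    (h0 : ∑ j, e j = 0) {lo hi : ℝ} (hw : ∀ j, lo ≤ w j ∧ w j ≤ hi) :
    |∑ j, e j * w j| ≤ (∑ j, |e j|) * (hi - lo) / 2 := by
  have key : ∑ j, e j * w j = ∑ j, e j * (w j - (lo + hi) / 2) := by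
    simp only [mul_sub, Finset.sum_sub_distrib, ← Finset.sum_mul, h0, zero_mul, sub_zero]
  rw [key]
  calc |∑ j, e j * (w j - (lo + hi) / 2)| ≤ ∑ j, |e j * (w j - (lo + hi) / 2)| :=
        Finset.abs_sum_le_sum_abs _ _
    _ = ∑ j, |e j| * |w j - (lo + hi) / 2| := by
        refine Finset.sum_congr rfl fun j _ => ?_; rw [abs_mul]
    _ ≤ ∑ j, |e j| * ((hi - lo) / 2) := by
        refine Finset.sum_le_sum fun j _ => mul_le_mul_of_nonneg_left ?_ (abs_nonneg _)
        rw [abs_le]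
        constructor
        · linarith [(hw j).1]
        · linarith [(hw j).2]
    _ = (∑ j, |e j|) * (hi - lo) / 2 := by rw [← Finset.sum_mul]; ring

set_option maxHeartbeats 1000000

/-- Error bound for the stochastic-factorization trick (Proposition 1).
Let `M = (S,A,P^a,r^a,γ)` be a finite MDP with `|S| = n` and `0 ≤ γ < 1`,
`D ∈ ℝ^{n×m}` stochastic, and for each `a` let `K^a ∈ ℝ^{m×n}` be stochastic
and `r̄^a ∈ ℝ^m`.  Let `v*` be the optimal value function of `M` (fixed point
of the Bellman optimality operator) and `Q̄*` the optimal action-value function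
of the reduced MDP `M̄ = (S̄,A,K^a·D,r̄^a,γ)`.  Then
`‖v* − Γ(D·Q̄*)‖_∞ ≤ (1/(1−γ)) max_a ‖r^a − D r̄^a‖_∞
  + (R̄_dif/(1−γ)²) ((γ/2) max_a ‖P^a − D K^a‖_∞ + σ(D))`. -/
theorem kbsf_value_error_bound
    {n m : ℕ} [NeZero n] [NeZero m] {A : Type*} [Fintype A] [Nonempty A]
    (γ : ℝ) (hγ0 : 0 ≤ γ) (hγ1 : γ < 1)
    (P : A → Matrix (Fin n) (Fin n) ℝ) (r : A → Fin n → ℝ)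
    (hP : ∀ a, (∀ i j, 0 ≤ P a i j) ∧ (∀ i, ∑ j, P a i j = 1))
    (D : Matrix (Fin n) (Fin m) ℝ)
    (hD : (∀ i j, 0 ≤ D i j) ∧ (∀ i, ∑ j, D i j = 1))
    (K : A → Matrix (Fin m) (Fin n) ℝ)
    (hK : ∀ a, (∀ i j, 0 ≤ K a i j) ∧ (∀ i, ∑ j, K a i j = 1))
    (rb : A → Fin m → ℝ)
    (v : Fin n → ℝ)
    (hv : ∀ i, v i = univ.sup' univ_nonempty
      (fun a => r a i + γ * ∑ j, P a i j * v j))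
    (Qb : Fin m → A → ℝ)
    (hQb : ∀ x a, Qb x a = rb a x + γ * ∑ y, (K a * D) x y *
      (univ.sup' univ_nonempty (fun b => Qb y b))) :
    ‖v - (fun i => univ.sup' univ_nonempty (fun a => ∑ j, D i j * Qb j a))‖ ≤
      (1 / (1 - γ)) *
        (univ.sup' univ_nonempty (fun a => ‖r a - D.mulVec (rb a)‖)) +
      ((univ.sup' univ_nonempty (fun p : A × Fin m => rb p.1 p.2) -
        univ.inf' univ_nonempty (fun p : A × Fin m => rb p.1 p.2)) / (1 - γ) ^ 2) *
        ((γ / 2) *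
          (univ.sup' univ_nonempty (fun a =>
            univ.sup' univ_nonempty (fun i => ∑ j, |(P a - D * K a) i j|))) +
         univ.sup' univ_nonempty (fun i =>
           1 - univ.sup' univ_nonempty (fun j => D i j))) := by
  classical
  obtain ⟨hD0, hD1⟩ := hD
  have hγ' : (0:ℝ) < 1 - γ := by linarith
  have a₁ : A := Classical.arbitrary A
  have y₁ : Fin m := ⟨0, Nat.pos_of_ne_zero (NeZero.ne m)⟩
  have i₁ : Fin n := ⟨0, Nat.pos_of_ne_zero (NeZero.ne n)⟩
  -- abbreviations (plain definitions, with application lemmas)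
  set vb : Fin m → ℝ := fun y => univ.sup' univ_nonempty (fun b => Qb y b) with hvbdef
  have hvbapp : ∀ y, vb y = univ.sup' univ_nonempty (fun b => Qb y b) := fun y => rfl
  set Φ : Fin n → ℝ :=
    (fun i => univ.sup' univ_nonempty (fun a => ∑ j, D i j * Qb j a)) with hΦdef
  have hΦapp : ∀ i, Φ i = univ.sup' univ_nonempty (fun a => ∑ j, D i j * Qb j a) :=
    fun i => rfl
  set εr : ℝ := univ.sup' univ_nonempty (fun a => ‖r a - D.mulVec (rb a)‖) with hεrdef
  set εP : ℝ := univ.sup' univ_nonempty (fun a =>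
      univ.sup' univ_nonempty (fun i => ∑ j, |(P a - D * K a) i j|)) with hεPdef
  set σ : ℝ := univ.sup' univ_nonempty (fun i =>
      1 - univ.sup' univ_nonempty (fun j => D i j)) with hσdef
  set Rd : ℝ := univ.sup' univ_nonempty (fun p : A × Fin m => rb p.1 p.2) -
      univ.inf' univ_nonempty (fun p : A × Fin m => rb p.1 p.2) with hRddef
  set S : ℝ := univ.sup' univ_nonempty (fun p : A × Fin m => Qb p.2 p.1) with hSdef
  set I : ℝ := univ.inf' univ_nonempty (fun p : A × Fin m => Qb p.2 p.1) with hIdef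
  set C : ℝ := Rd / (1 - γ) with hCdef
  set E : Fin n → ℝ := fun i => ∑ j, D i j * vb j with hEdef
  have hEapp : ∀ i, E i = ∑ j, D i j * vb j := fun i => rfl
  -- basic stochasticity facts
  have hKD : ∀ a, (∀ x y, 0 ≤ (K a * D) x y) ∧ (∀ x, ∑ y, (K a * D) x y = 1) := by
    intro a
    constructor
    · intro x y
      rw [Matrix.mul_apply]
      exact Finset.sum_nonneg fun z _ => mul_nonneg ((hK a).1 x z) (hD0 z y)
    · intro x
      simp only [Matrix.mul_apply]
      rw [Finset.sum_comm]
      calc ∑ z, ∑ y, K a x z * D z y = ∑ z, K a x z * ∑ y, D z y := by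
            simp [Finset.mul_sum]
        _ = 1 := by simp [hD1, (hK a).2 x]
  have hDK : ∀ a, (∀ x y, 0 ≤ (D * K a) x y) ∧ (∀ x, ∑ y, (D * K a) x y = 1) := by
    intro a
    constructor
    · intro x y
      rw [Matrix.mul_apply]
      exact Finset.sum_nonneg fun z _ => mul_nonneg (hD0 x z) ((hK a).1 z y)
    · intro x
      simp only [Matrix.mul_apply]
      rw [Finset.sum_comm]
      calc ∑ z, ∑ y, D x z * K a z y = ∑ z, D x z * ∑ y, K a z y := by
            simp [Finset.mul_sum]
        _ = 1 := by simp [(hK a).2, hD1 x]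
  -- bounds on Qb and vb
  have hQbS : ∀ y a, Qb y a ≤ S := by
    intro y a
    rw [hSdef]
    exact Finset.le_sup' (fun p : A × Fin m => Qb p.2 p.1) (Finset.mem_univ (a, y))
  have hIQb : ∀ y a, I ≤ Qb y a := by
    intro y a
    rw [hIdef]
    exact Finset.inf'_le (fun p : A × Fin m => Qb p.2 p.1) (Finset.mem_univ (a, y))
  have hvbS : ∀ y, vb y ≤ S := by
    intro y
    rw [hvbapp y]
    exact Finset.sup'_le _ _ fun b _ => hQbS y b
  have hIvb : ∀ y, I ≤ vb y := by
    intro y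
    refine le_trans (hIQb y a₁) ?_
    rw [hvbapp y]
    exact Finset.le_sup' (fun b => Qb y b) (Finset.mem_univ a₁)
  have hIS : I ≤ S := le_trans (hIQb y₁ a₁) (hQbS y₁ a₁)
  -- Rd ≥ 0
  have hRd0 : 0 ≤ Rd := by
    rw [hRddef]
    have h1 := Finset.inf'_le (fun p : A × Fin m => rb p.1 p.2) (Finset.mem_univ (a₁, y₁))
    have h2 := Finset.le_sup' (fun p : A × Fin m => rb p.1 p.2) (Finset.mem_univ (a₁, y₁))
    simp only at h1 h2
    linarith
  have hC0 : 0 ≤ C := by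
    rw [hCdef]; exact div_nonneg hRd0 hγ'.le
  -- spread of Qb bounded by C
  have hSI : S - I ≤ C := by
    have hstep : ∀ (a : A) (y : Fin m), ∀ (a' : A) (y' : Fin m),
        Qb y a - Qb y' a' ≤ Rd + γ * (S - I) := by
      intro a y a' y'
      have h1 : Qb y a ≤ rb a y + γ * S := by
        rw [hQb y a]
        have := conv_le' (fun z => (K a * D) y z) vb ((hKD a).1 y) ((hKD a).2 y) hvbS
        nlinarith
      have h2 : rb a' y' + γ * I ≤ Qb y' a' := by
        rw [hQb y' a']
        have := conv_ge' (fun z => (K a' * D) y' z) vb ((hKD a').1 y') ((hKD a').2 y') hIvb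
        nlinarith
      have h3 : rb a y - rb a' y' ≤ Rd := by
        rw [hRddef]
        have h4 := Finset.le_sup' (fun p : A × Fin m => rb p.1 p.2) (Finset.mem_univ (a, y))
        have h5 := Finset.inf'_le (fun p : A × Fin m => rb p.1 p.2) (Finset.mem_univ (a', y'))
        simp only at h4 h5
        linarith
      linarith
    have hS_le : S ≤ I + (Rd + γ * (S - I)) := by
      conv_lhs => rw [hSdef]
      refine Finset.sup'_le _ _ fun p _ => ?_
      have hpI : Qb p.2 p.1 - (Rd + γ * (S - I)) ≤ I := by
        conv_rhs => rw [hIdef]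
        refine Finset.le_inf' _ _ fun q _ => ?_
        have := hstep p.1 p.2 q.1 q.2
        linarith
      linarith
    rw [hCdef, le_div_iff₀ hγ']
    nlinarith
  -- Φ vs E
  have hΦleE : ∀ i, Φ i ≤ E i := by
    intro i
    rw [hΦapp i, hEapp i]
    refine Finset.sup'_le _ _ fun a _ => ?_
    refine Finset.sum_le_sum fun j _ => mul_le_mul_of_nonneg_left ?_ (hD0 i j)
    rw [hvbapp j]
    exact Finset.le_sup' (fun b => Qb j b) (Finset.mem_univ a)
  have hσ0 : 0 ≤ σ := by
    rw [hσdef]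
    refine le_trans ?_ (Finset.le_sup' (fun i =>
      1 - univ.sup' univ_nonempty (fun j => D i j)) (Finset.mem_univ i₁))
    rw [sub_nonneg]
    refine Finset.sup'_le _ _ fun j _ => ?_
    calc D i₁ j ≤ ∑ j', D i₁ j' :=
          Finset.single_le_sum (fun j' _ => hD0 i₁ j') (Finset.mem_univ j)
      _ = 1 := hD1 i₁
  have hEleΦ : ∀ i, E i - Φ i ≤ σ * C := by
    intro i
    obtain ⟨j₀, _, hj₀⟩ := Finset.exists_mem_eq_sup' (univ_nonempty) (fun j => D i j)
    obtain ⟨a₀, _, ha₀⟩ := Finset.exists_mem_eq_sup' (univ_nonempty) (fun b => Qb j₀ b)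
    have hΦge : ∑ j, D i j * Qb j a₀ ≤ Φ i := by
      rw [hΦapp i]
      exact Finset.le_sup' (fun a => ∑ j, D i j * Qb j a) (Finset.mem_univ a₀)
    have hsplit : E i - ∑ j, D i j * Qb j a₀ = ∑ j, D i j * (vb j - Qb j a₀) := by
      rw [hEapp i, ← Finset.sum_sub_distrib]
      exact Finset.sum_congr rfl fun j _ => by ring
    have hvbj₀ : vb j₀ - Qb j₀ a₀ = 0 := by
      rw [hvbapp j₀, ha₀, sub_self]
    have hterm : ∀ j, vb j - Qb j a₀ ≤ C := by
      intro j
      have h1 := hvbS j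
      have h2 := hIQb j a₀
      linarith
    have hσi : 1 - D i j₀ ≤ σ := by
      rw [hσdef]
      refine le_trans ?_ (Finset.le_sup' (fun i =>
        1 - univ.sup' univ_nonempty (fun j => D i j)) (Finset.mem_univ i))
      rw [← hj₀]
    have hsum : ∑ j, D i j * (vb j - Qb j a₀) ≤ (1 - D i j₀) * C := by
      have herase : ∑ j ∈ univ.erase j₀, D i j * (vb j - Qb j a₀) + D i j₀ * (vb j₀ - Qb j₀ a₀)
          = ∑ j, D i j * (vb j - Qb j a₀) :=
        Finset.sum_erase_add _ _ (Finset.mem_univ j₀)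
      have heraseD : ∑ j ∈ univ.erase j₀, D i j + D i j₀ = ∑ j, D i j :=
        Finset.sum_erase_add _ _ (Finset.mem_univ j₀)
      rw [hD1 i] at heraseD
      rw [← herase, hvbj₀, mul_zero, add_zero]
      calc ∑ j ∈ univ.erase j₀, D i j * (vb j - Qb j a₀)
          ≤ ∑ j ∈ univ.erase j₀, D i j * C :=
            Finset.sum_le_sum fun j _ => mul_le_mul_of_nonneg_left (hterm j) (hD0 i j)
        _ = (1 - D i j₀) * C := by rw [← Finset.sum_mul]; congr 1; linarith
    calc E i - Φ i ≤ E i - ∑ j, D i j * Qb j a₀ := by linarith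
      _ = ∑ j, D i j * (vb j - Qb j a₀) := hsplit
      _ ≤ (1 - D i j₀) * C := hsum
      _ ≤ σ * C := mul_le_mul_of_nonneg_right hσi hC0
  have habsΦE : ∀ j, |Φ j - E j| ≤ σ * C := by
    intro j
    rw [abs_le]
    constructor
    · have := hEleΦ j; linarith
    · have h1 := hΦleE j
      have h2 := mul_nonneg hσ0 hC0
      linarith
  -- E bounds
  have hEbd : ∀ z, I ≤ E z ∧ E z ≤ I + C := by
    intro z
    rw [hEapp z]
    constructor
    · exact conv_ge' (fun y => D z y) vb (hD0 z) (hD1 z) hIvb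
    · refine conv_le' (fun y => D z y) vb (hD0 z) (hD1 z) fun y => ?_
      have := hvbS y; linarith [hSI]
  -- key identity
  have hkey : ∀ (i : Fin n) (a : A),
      ∑ j, D i j * Qb j a = D.mulVec (rb a) i + γ * ∑ z, (D * K a) i z * E z := by
    intro i a
    have h1 : ∑ j, D i j * Qb j a
        = ∑ j, D i j * rb a j + γ * ∑ j, D i j * ∑ y, (K a * D) j y * vb y := by
      have e : ∀ j, D i j * Qb j a
          = D i j * rb a j + γ * (D i j * ∑ y, (K a * D) j y * vb y) := by
        intro j
        rw [hQb j a]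
        ring
      calc ∑ j, D i j * Qb j a
          = ∑ j, (D i j * rb a j + γ * (D i j * ∑ y, (K a * D) j y * vb y)) :=
            Finset.sum_congr rfl fun j _ => e j
        _ = ∑ j, D i j * rb a j + γ * ∑ j, D i j * ∑ y, (K a * D) j y * vb y := by
            rw [Finset.sum_add_distrib, Finset.mul_sum]
    have h4 : ∑ j, D i j * ∑ y, (K a * D) j y * vb y = ∑ z, (D * K a) i z * E z := by
      have h2 : ∑ j, D i j * ∑ y, (K a * D) j y * vb y
          = (D.mulVec ((K a * D).mulVec vb)) i := rfl
      have h3 : ∑ z, (D * K a) i z * E z = ((D * K a).mulVec (D.mulVec vb)) i := rfl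
      rw [h2, h3, Matrix.mulVec_mulVec, Matrix.mulVec_mulVec, Matrix.mul_assoc]
    have h5 : ∑ j, D i j * rb a j = D.mulVec (rb a) i := rfl
    rw [h1, h4, h5]
  -- per-action bounds
  have hεr0 : ∀ a i, |r a i - D.mulVec (rb a) i| ≤ εr := by
    intro a i
    have h1 : |(r a - D.mulVec (rb a)) i| ≤ ‖r a - D.mulVec (rb a)‖ := by
      rw [← Real.norm_eq_abs]
      exact norm_le_pi_norm (r a - D.mulVec (rb a)) i
    rw [Pi.sub_apply] at h1
    refine le_trans h1 ?_
    rw [hεrdef]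
    exact Finset.le_sup' (fun a => ‖r a - D.mulVec (rb a)‖) (Finset.mem_univ a)
  have hεP0 : ∀ a i, ∑ j, |(P a - D * K a) i j| ≤ εP := by
    intro a i
    rw [hεPdef]
    refine le_trans (Finset.le_sup' (fun i => ∑ j, |(P a - D * K a) i j|)
      (Finset.mem_univ i)) ?_
    exact Finset.le_sup' (fun a => univ.sup' univ_nonempty
      (fun i => ∑ j, |(P a - D * K a) i j|)) (Finset.mem_univ a)
  have hεPnn : 0 ≤ εP :=
    le_trans (Finset.sum_nonneg fun j _ => abs_nonneg _) (hεP0 a₁ i₁)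
  have hεrnn : 0 ≤ εr := le_trans (abs_nonneg _) (hεr0 a₁ i₁)
  clear_value vb Φ εr εP σ Rd S I C E
  set B : ℝ := εr + σ * C + γ * (εP * C) / 2 with hBdef
  clear_value B
  -- TΦ - Φ bound
  have hTΦ : ∀ i, |univ.sup' univ_nonempty (fun a => r a i + γ * ∑ j, P a i j * Φ j) - Φ i|
      ≤ B := by
    intro i
    have hΦi : Φ i = univ.sup' univ_nonempty
        (fun a => D.mulVec (rb a) i + γ * ∑ z, (D * K a) i z * E z) := by
      rw [hΦapp i]
      exact Finset.sup'_congr _ rfl fun a _ => hkey i a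
    rw [hΦi]
    refine abs_sup'_sub_sup'_le' _ _ _ fun a => ?_
    have t1 : |r a i - D.mulVec (rb a) i| ≤ εr := hεr0 a i
    have t2 : |∑ j, P a i j * Φ j - ∑ j, P a i j * E j| ≤ σ * C := by
      have heq : ∑ j, P a i j * Φ j - ∑ j, P a i j * E j = ∑ j, P a i j * (Φ j - E j) := by
        rw [← Finset.sum_sub_distrib]
        exact Finset.sum_congr rfl fun j _ => by ring
      rw [heq]
      exact abs_conv_le' _ _ ((hP a).1 i) ((hP a).2 i) habsΦE
    have t3 : |∑ j, P a i j * E j - ∑ z, (D * K a) i z * E z| ≤ εP * C / 2 := by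
      have heq : ∑ j, P a i j * E j - ∑ z, (D * K a) i z * E z
          = ∑ j, (P a - D * K a) i j * E j := by
        rw [← Finset.sum_sub_distrib]
        refine Finset.sum_congr rfl fun j _ => ?_
        rw [Matrix.sub_apply]
        ring
      rw [heq]
      have h0 : ∑ j, (P a - D * K a) i j = 0 := by
        simp only [Matrix.sub_apply, Finset.sum_sub_distrib, (hP a).2 i, (hDK a).2 i, sub_self]
      have hrz := rowzero_spread' (fun j => (P a - D * K a) i j) E h0 hEbd
      calc |∑ j, (P a - D * K a) i j * E j|
          ≤ (∑ j, |(P a - D * K a) i j|) * (I + C - I) / 2 := hrz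
        _ = (∑ j, |(P a - D * K a) i j|) * C / 2 := by ring_nf
        _ ≤ εP * C / 2 := by
            have h2 : (∑ j, |(P a - D * K a) i j|) * C ≤ εP * C :=
              mul_le_mul_of_nonneg_right (hεP0 a i) hC0
            linarith
    have hσC : 0 ≤ σ * C := mul_nonneg hσ0 hC0
    have key : r a i + γ * ∑ j, P a i j * Φ j -
        (D.mulVec (rb a) i + γ * ∑ z, (D * K a) i z * E z)
        = (r a i - D.mulVec (rb a) i)
          + γ * (∑ j, P a i j * Φ j - ∑ j, P a i j * E j)
          + γ * (∑ j, P a i j * E j - ∑ z, (D * K a) i z * E z) := by ring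
    rw [key, hBdef]
    have habs2 : |γ * (∑ j, P a i j * Φ j - ∑ j, P a i j * E j)| ≤ γ * (σ * C) := by
      rw [abs_mul, abs_of_nonneg hγ0]
      exact mul_le_mul_of_nonneg_left t2 hγ0
    have habs3 : |γ * (∑ j, P a i j * E j - ∑ z, (D * K a) i z * E z)| ≤ γ * (εP * C / 2) := by
      rw [abs_mul, abs_of_nonneg hγ0]
      exact mul_le_mul_of_nonneg_left t3 hγ0
    have hγσ : γ * (σ * C) ≤ σ * C := by nlinarith
    calc |(r a i - D.mulVec (rb a) i)
          + γ * (∑ j, P a i j * Φ j - ∑ j, P a i j * E j)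
          + γ * (∑ j, P a i j * E j - ∑ z, (D * K a) i z * E z)|
        ≤ |r a i - D.mulVec (rb a) i|
          + |γ * (∑ j, P a i j * Φ j - ∑ j, P a i j * E j)|
          + |γ * (∑ j, P a i j * E j - ∑ z, (D * K a) i z * E z)| :=
          (abs_add_le _ _).trans (add_le_add_left (abs_add_le _ _) _)
      _ ≤ εr + γ * (σ * C) + γ * (εP * C / 2) := add_le_add (add_le_add t1 habs2) habs3
      _ ≤ εr + σ * C + γ * (εP * C) / 2 := by linarith
  -- contraction step
  have hvΦ : ∀ i, |v i - Φ i| ≤ γ * ‖v - Φ‖ + B := by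
    intro i
    set Ti : ℝ := univ.sup' univ_nonempty (fun a => r a i + γ * ∑ j, P a i j * Φ j) with hTidef
    have h1 : |v i - Ti| ≤ γ * ‖v - Φ‖ := by
      rw [hv i, hTidef]
      refine abs_sup'_sub_sup'_le' _ _ _ fun a => ?_
      have heq : r a i + γ * ∑ j, P a i j * v j - (r a i + γ * ∑ j, P a i j * Φ j)
          = γ * ∑ j, P a i j * (v j - Φ j) := by
        have e : ∑ j, P a i j * (v j - Φ j) = ∑ j, P a i j * v j - ∑ j, P a i j * Φ j := by
          rw [← Finset.sum_sub_distrib]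
          exact Finset.sum_congr rfl fun j _ => by ring
        rw [e]; ring
      rw [heq, abs_mul, abs_of_nonneg hγ0]
      refine mul_le_mul_of_nonneg_left ?_ hγ0
      refine abs_conv_le' _ _ ((hP a).1 i) ((hP a).2 i) fun j => ?_
      have hnl := norm_le_pi_norm (v - Φ) j
      rwa [Pi.sub_apply, Real.norm_eq_abs] at hnl
    have h2 : |Ti - Φ i| ≤ B := hTΦ i
    have hsplit : v i - Φ i = (v i - Ti) + (Ti - Φ i) := by ring
    rw [hsplit]
    exact le_trans (abs_add_le _ _) (add_le_add h1 h2)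
  have hBnn : 0 ≤ B := by
    rw [hBdef]
    have h1 := mul_nonneg hσ0 hC0
    have h2 := mul_nonneg hεPnn hC0
    nlinarith
  have hnorm : ‖v - Φ‖ ≤ γ * ‖v - Φ‖ + B := by
    have hnn : 0 ≤ γ * ‖v - Φ‖ + B :=
      add_nonneg (mul_nonneg hγ0 (norm_nonneg _)) hBnn
    rw [pi_norm_le_iff_of_nonneg hnn]
    intro i
    rw [Pi.sub_apply, Real.norm_eq_abs]
    exact hvΦ i
  have hmain : ‖v - Φ‖ ≤ B / (1 - γ) := by
    rw [le_div_iff₀ hγ']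
    nlinarith [hnorm]
  refine le_trans hmain ?_
  have hrhs : B / (1 - γ) = (1 / (1 - γ)) * εr + (Rd / (1 - γ) ^ 2) * ((γ / 2) * εP + σ) := by
    rw [hBdef, hCdef]
    field_simp
    ring
  rw [hrhs]
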